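/- If A = (μ_A, ν_A) is an intuitionistic fuzzy submodule of an R-module M, then its radical √A = (√μ_A, √ν_A), defined by √μ_A(r) = sup_{n∈ℕ} inf_{m∈M} μ_A(rⁿ·m) and √ν_A(r) = inf_{n∈ℕ} sup_{m∈M} ν_A(rⁿ·m), is an intuitionistic fuzzy ideal of R. -/

import Mathlib

open scoped Classical

/-- An intuitionistic fuzzy submodule of an `R`-module `M`. -/
structure IFSub (R M : Type*) [CommRing R] [AddCommGroup M] [Module R M] where
  mu : M → ℝ
  nu : M → ℝ
  mu_nonneg : ∀ x, 0 ≤ mu x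
  nu_nonneg : ∀ x, 0 ≤ nu x
  mu_le_one : ∀ x, mu x ≤ 1
  nu_le_one : ∀ x, nu x ≤ 1
  sum_le_one : ∀ x, mu x + nu x ≤ 1
  mu_zero : mu 0 = 1
  nu_zero : nu 0 = 0
  mu_add : ∀ x y, min (mu x) (mu y) ≤ mu (x + y)
  nu_add : ∀ x y, nu (x + y) ≤ max (nu x) (nu y)
  mu_smul : ∀ (r : R) (x : M), mu x ≤ mu (r • x)
  nu_smul : ∀ (r : R) (x : M), nu (r • x) ≤ nu x

/-- Predicate version: `(mu, nu)` is an intuitionistic fuzzy submodule. -/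
def IsIFSub (R : Type*) {M : Type*} [CommRing R] [AddCommGroup M] [Module R M]
    (mu nu : M → ℝ) : Prop :=
  (∀ x, 0 ≤ mu x) ∧ (∀ x, 0 ≤ nu x) ∧ (∀ x, mu x ≤ 1) ∧ (∀ x, nu x ≤ 1) ∧
  (∀ x, mu x + nu x ≤ 1) ∧ mu 0 = 1 ∧ nu 0 = 0 ∧
  (∀ x y, min (mu x) (mu y) ≤ mu (x + y)) ∧
  (∀ x y, nu (x + y) ≤ max (nu x) (nu y)) ∧
  (∀ (r : R) (x : M), mu x ≤ mu (r • x)) ∧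
  (∀ (r : R) (x : M), nu (r • x) ≤ nu x)

/-- `(mu, nu)` is an intuitionistic fuzzy ideal of the ring `R`. -/
def IsIFIdeal {R : Type*} [CommRing R] (mu nu : R → ℝ) : Prop :=
  (∀ x y, min (mu x) (mu y) ≤ mu (x - y)) ∧
  (∀ x y, nu (x - y) ≤ max (nu x) (nu y)) ∧
  (∀ x y, max (mu x) (mu y) ≤ mu (x * y)) ∧
  (∀ x y, nu (x * y) ≤ min (nu x) (nu y))

/-- μ-part of the intuitionistic fuzzy radical of a fuzzy subset of a module
(`n` ranges over the positive naturals). -/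
noncomputable def radmu {R M : Type*} [CommRing R] [AddCommGroup M] [Module R M]
    (mu : M → ℝ) (r : R) : ℝ :=
  ⨆ n : ℕ, ⨅ m : M, mu (r ^ (n + 1) • m)

/-- ν-part of the intuitionistic fuzzy radical. -/
noncomputable def radnu {R M : Type*} [CommRing R] [AddCommGroup M] [Module R M]
    (nu : M → ℝ) (r : R) : ℝ :=
  ⨅ n : ℕ, ⨆ m : M, nu (r ^ (n + 1) • m)

/-- μ-part of the radical of a fuzzy subset of the ring `R`. -/
noncomputable def ringradmu {R : Type*} [CommRing R] (mu : R → ℝ) (r : R) : ℝ :=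
  ⨆ n : ℕ, mu (r ^ (n + 1))

/-- ν-part of the radical of a fuzzy subset of the ring `R`. -/
noncomputable def ringradnu {R : Type*} [CommRing R] (nu : R → ℝ) (r : R) : ℝ :=
  ⨅ n : ℕ, nu (r ^ (n + 1))

/-- μ-part of `Ā = (A : M)`. -/
noncomputable def barmu {R M : Type*} [CommRing R] [AddCommGroup M] [Module R M]
    (mu : M → ℝ) (r : R) : ℝ :=
  ⨅ m : M, mu (r • m)

/-- ν-part of `Ā = (A : M)`. -/
noncomputable def barnu {R M : Type*} [CommRing R] [AddCommGroup M] [Module R M]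
    (nu : M → ℝ) (r : R) : ℝ :=
  ⨆ m : M, nu (r • m)

/-- μ-part of the sum of two intuitionistic fuzzy subsets. -/
noncomputable def summu {M : Type*} [AddCommGroup M] (f g : M → ℝ) (x : M) : ℝ :=
  sSup {t : ℝ | ∃ y z : M, y + z = x ∧ t = min (f y) (g z)}

/-- ν-part of the sum of two intuitionistic fuzzy subsets. -/
noncomputable def sumnu {M : Type*} [AddCommGroup M] (f g : M → ℝ) (x : M) : ℝ :=
  sInf {t : ℝ | ∃ y z : M, y + z = x ∧ t = max (f y) (g z)}

/-- μ-part of the intuitionistic fuzzy characteristic function of a set. -/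
noncomputable def chimu {X : Type*} (s : Set X) (x : X) : ℝ :=
  if x ∈ s then 1 else 0

/-- ν-part of the intuitionistic fuzzy characteristic function of a set. -/
noncomputable def chinu {X : Type*} (s : Set X) (x : X) : ℝ :=
  if x ∈ s then 0 else 1

/-- The sup property: suprema of `mu` and infima of `nu` over nonempty subsets are attained. -/
def SupProp {X : Type*} (mu nu : X → ℝ) : Prop :=
  ∀ Y : Set X, Y.Nonempty →
    ∃ y₀ ∈ Y, (∀ y ∈ Y, mu y ≤ mu y₀) ∧ (∀ y ∈ Y, nu y₀ ≤ nu y)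

/-- `(mu, nu)` is an intuitionistic fuzzy primary submodule. -/
def IsIFPrimary (R : Type*) {M : Type*} [CommRing R] [AddCommGroup M] [Module R M]
    (mu nu : M → ℝ) : Prop :=
  ∀ (r : R) (m : M),
    (mu (r • m) = mu m ∧ nu (r • m) = nu m) ∨
    (mu (r • m) ≤ radmu mu r ∧ radnu nu r ≤ nu (r • m))

/-- μ-part of the image of a fuzzy subset under a map. -/
noncomputable def immu {M M' : Type*} (f : M → M') (mu : M → ℝ) (y : M') : ℝ :=
  sSup {t : ℝ | ∃ x : M, f x = y ∧ t = mu x}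

/-- ν-part of the image of a fuzzy subset under a map. -/
noncomputable def imnu {M M' : Type*} (f : M → M') (nu : M → ℝ) (y : M') : ℝ :=
  sInf {t : ℝ | ∃ x : M, f x = y ∧ t = nu x}

/-- An intuitionistic fuzzy ideal of `R` (structure version, with `mu 0 = 1`, `nu 0 = 0`). -/
structure IFIdealS (R : Type*) [CommRing R] where
  mu : R → ℝ
  nu : R → ℝ
  mu_nonneg : ∀ x, 0 ≤ mu x
  nu_nonneg : ∀ x, 0 ≤ nu x
  mu_le_one : ∀ x, mu x ≤ 1
  nu_le_one : ∀ x, nu x ≤ 1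
  sum_le_one : ∀ x, mu x + nu x ≤ 1
  mu_zero : mu 0 = 1
  nu_zero : nu 0 = 0
  mu_sub : ∀ x y, min (mu x) (mu y) ≤ mu (x - y)
  nu_sub : ∀ x y, nu (x - y) ≤ max (nu x) (nu y)
  mu_mul : ∀ x y, max (mu x) (mu y) ≤ mu (x * y)
  nu_mul : ∀ x y, nu (x * y) ≤ min (nu x) (nu y)

section Aux

variable {R M : Type*} [CommRing R] [AddCommGroup M] [Module R M]

variable (A : IFSub R M)


noncomputable def Bmu (z : R) : ℝ := ⨅ m : M, A.mu (z • m)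
noncomputable def Nnu (z : R) : ℝ := ⨆ m : M, A.nu (z • m)

lemma Bmu_bddBelow (z : R) : BddBelow (Set.range fun m : M => A.mu (z • m)) :=
  ⟨0, by rintro t ⟨m, rfl⟩; exact A.mu_nonneg _⟩

lemma Nnu_bddAbove (z : R) : BddAbove (Set.range fun m : M => A.nu (z • m)) :=
  ⟨1, by rintro t ⟨m, rfl⟩; exact A.nu_le_one _⟩

lemma Bmu_le (z : R) (m : M) : Bmu A z ≤ A.mu (z • m) := ciInf_le (Bmu_bddBelow A z) m
lemma le_Nnu (z : R) (m : M) : A.nu (z • m) ≤ Nnu A z := le_ciSup (Nnu_bddAbove A z) m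

lemma Bmu_nonneg (z : R) : 0 ≤ Bmu A z := le_ciInf fun m => A.mu_nonneg _
lemma Bmu_le_one (z : R) : Bmu A z ≤ 1 := (Bmu_le A z 0).trans (A.mu_le_one _)
lemma Nnu_nonneg (z : R) : 0 ≤ Nnu A z := (A.nu_nonneg _).trans (le_Nnu A z 0)
lemma Nnu_le_one (z : R) : Nnu A z ≤ 1 := ciSup_le fun m => A.nu_le_one _

lemma Bmu_zero : Bmu A 0 = 1 := by
  simp [Bmu, zero_smul, A.mu_zero, ciInf_const]

lemma Nnu_zero : Nnu A 0 = 0 := by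
  simp [Nnu, zero_smul, A.nu_zero, ciSup_const]

lemma Bmu_mul (a b : R) : max (Bmu A a) (Bmu A b) ≤ Bmu A (a * b) := by
  refine le_ciInf fun m => max_le ?_ ?_
  · calc Bmu A a ≤ A.mu (a • (b • m)) := Bmu_le A a _
      _ = A.mu ((a * b) • m) := by rw [mul_smul]
  · calc Bmu A b ≤ A.mu (b • (a • m)) := Bmu_le A b _
      _ = A.mu ((a * b) • m) := by rw [mul_comm, mul_smul]

lemma Nnu_mul (a b : R) : Nnu A (a * b) ≤ min (Nnu A a) (Nnu A b) := by
  refine ciSup_le fun m => le_min ?_ ?_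
  · calc A.nu ((a * b) • m) = A.nu (a • (b • m)) := by rw [mul_smul]
      _ ≤ Nnu A a := le_Nnu A a _
  · calc A.nu ((a * b) • m) = A.nu (b • (a • m)) := by rw [mul_comm, mul_smul]
      _ ≤ Nnu A b := le_Nnu A b _

lemma Bmu_dvd {a b : R} (h : a ∣ b) : Bmu A a ≤ Bmu A b := by
  obtain ⟨c, rfl⟩ := h
  exact (le_max_left _ _).trans (Bmu_mul A a c)

lemma Nnu_dvd {a b : R} (h : a ∣ b) : Nnu A b ≤ Nnu A a := by
  obtain ⟨c, rfl⟩ := h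
  exact (Nnu_mul A a c).trans (min_le_left _ _)

lemma Bmu_sub (a b : R) : min (Bmu A a) (Bmu A b) ≤ Bmu A (a - b) := by
  refine le_ciInf fun m => ?_
  have h1 : Bmu A a ≤ A.mu (a • m) := Bmu_le A a m
  have h2 : Bmu A b ≤ A.mu (-(b • m)) := by
    calc Bmu A b ≤ A.mu (b • m) := Bmu_le A b m
      _ ≤ A.mu ((-1 : R) • (b • m)) := A.mu_smul _ _
      _ = A.mu (-(b • m)) := by rw [neg_one_smul]
  calc min (Bmu A a) (Bmu A b) ≤ min (A.mu (a • m)) (A.mu (-(b • m))) :=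
        min_le_min h1 h2
    _ ≤ A.mu (a • m + -(b • m)) := A.mu_add _ _
    _ = A.mu ((a - b) • m) := by rw [← sub_eq_add_neg, ← sub_smul]

lemma Nnu_sub (a b : R) : Nnu A (a - b) ≤ max (Nnu A a) (Nnu A b) := by
  refine ciSup_le fun m => ?_
  have h2 : A.nu (-(b • m)) ≤ Nnu A b := by
    calc A.nu (-(b • m)) = A.nu ((-1 : R) • (b • m)) := by rw [neg_one_smul]
      _ ≤ A.nu (b • m) := A.nu_smul _ _
      _ ≤ Nnu A b := le_Nnu A b m
  calc A.nu ((a - b) • m) = A.nu (a • m + -(b • m)) := by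
        rw [← sub_eq_add_neg, ← sub_smul]
    _ ≤ max (A.nu (a • m)) (A.nu (-(b • m))) := A.nu_add _ _
    _ ≤ max (Nnu A a) (Nnu A b) := max_le_max (le_Nnu A a m) h2

lemma Bmu_add (a b : R) : min (Bmu A a) (Bmu A b) ≤ Bmu A (a + b) := by
  have := Bmu_sub A a (-b)
  rw [sub_neg_eq_add] at this
  exact le_trans (min_le_min le_rfl (Bmu_dvd A (dvd_neg.2 dvd_rfl))) this

lemma Nnu_add (a b : R) : Nnu A (a + b) ≤ max (Nnu A a) (Nnu A b) := by
  have := Nnu_sub A a (-b)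
  rw [sub_neg_eq_add] at this
  exact this.trans (max_le_max le_rfl (Nnu_dvd A (dvd_neg.2 dvd_rfl)))

lemma Bmu_sum {ι : Type*} (s : Finset ι) (f : ι → R) {c : ℝ} (hc : c ≤ 1)
    (h : ∀ i ∈ s, c ≤ Bmu A (f i)) : c ≤ Bmu A (∑ i ∈ s, f i) := by
  classical
  induction s using Finset.induction_on with
  | empty => simpa [Bmu_zero A] using hc
  | insert _ _ hx ih =>
    rename_i a s
    rw [Finset.sum_insert hx]
    refine le_trans (le_min (h a (Finset.mem_insert_self a s)) ?_) (Bmu_add A _ _)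
    exact ih fun i hi => h i (Finset.mem_insert_of_mem hi)

lemma Nnu_sum {ι : Type*} (s : Finset ι) (f : ι → R) {c : ℝ} (hc : 0 ≤ c)
    (h : ∀ i ∈ s, Nnu A (f i) ≤ c) : Nnu A (∑ i ∈ s, f i) ≤ c := by
  classical
  induction s using Finset.induction_on with
  | empty => simpa [Nnu_zero A] using hc
  | insert _ _ hx ih =>
    rename_i a s
    rw [Finset.sum_insert hx]
    refine le_trans (Nnu_add A _ _) (max_le (h a (Finset.mem_insert_self a s)) ?_)
    exact ih fun i hi => h i (Finset.mem_insert_of_mem hi)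

lemma dvd_term (x y : R) (n k N m : ℕ) (hN : N = n + k + 2) (hm : m ≤ N) :
    x ^ (n + 1) ∣ ((-1 : R) ^ (m + N) * x ^ m * y ^ (N - m) * (N.choose m : R)) ∨
    y ^ (k + 1) ∣ ((-1 : R) ^ (m + N) * x ^ m * y ^ (N - m) * (N.choose m : R)) := by
  rcases le_or_gt (n + 1) m with h | h
  · left
    exact (((pow_dvd_pow x h).mul_left _).mul_right _).mul_right _
  · right
    have : k + 1 ≤ N - m := by omega
    exact (((pow_dvd_pow y this).mul_left _).mul_right _)

lemma Bmu_binom (x y : R) (n k : ℕ) :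
    min (Bmu A (x ^ (n + 1))) (Bmu A (y ^ (k + 1))) ≤ Bmu A ((x - y) ^ (n + k + 2)) := by
  rw [sub_pow]
  refine Bmu_sum A _ _ (min_le_of_left_le (Bmu_le_one A _)) fun m hm => ?_
  rcases dvd_term x y n k _ m rfl (by simpa using Nat.lt_succ_iff.mp (Finset.mem_range.mp hm)) with h | h
  · exact (min_le_left _ _).trans (Bmu_dvd A h)
  · exact (min_le_right _ _).trans (Bmu_dvd A h)

lemma Nnu_binom (x y : R) (n k : ℕ) :
    Nnu A ((x - y) ^ (n + k + 2)) ≤ max (Nnu A (x ^ (n + 1))) (Nnu A (y ^ (k + 1))) := by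
  rw [sub_pow]
  refine Nnu_sum A _ _ (le_max_of_le_left (Nnu_nonneg A _)) fun m hm => ?_
  rcases dvd_term x y n k _ m rfl (by simpa using Nat.lt_succ_iff.mp (Finset.mem_range.mp hm)) with h | h
  · exact (Nnu_dvd A h).trans (le_max_left _ _)
  · exact (Nnu_dvd A h).trans (le_max_right _ _)

end Aux

/-- the radical of an intuitionistic fuzzy submodule is an
intuitionistic fuzzy ideal of `R`. -/
theorem stmt0 {R M : Type*} [CommRing R] [AddCommGroup M] [Module R M]
    (A : IFSub R M) :
    IsIFIdeal (radmu (R := R) A.mu) (radnu (R := R) A.nu) := by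

  have hrmu : ∀ r : R, radmu (R := R) A.mu r = ⨆ n : ℕ, Bmu A (r ^ (n + 1)) :=
    fun r => rfl
  have hrnu : ∀ r : R, radnu (R := R) A.nu r = ⨅ n : ℕ, Nnu A (r ^ (n + 1)) :=
    fun r => rfl
  have hbA : ∀ x : R, BddAbove (Set.range fun n : ℕ => Bmu A (x ^ (n + 1))) :=
    fun x => ⟨1, by rintro t ⟨n, rfl⟩; exact Bmu_le_one A _⟩
  have hbB : ∀ x : R, BddBelow (Set.range fun n : ℕ => Nnu A (x ^ (n + 1))) :=
    fun x => ⟨0, by rintro t ⟨n, rfl⟩; exact Nnu_nonneg A _⟩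
  refine ⟨fun x y => ?_, fun x y => ?_, fun x y => ?_, fun x y => ?_⟩
  · rw [hrmu x, hrmu y, hrmu (x - y)]
    by_contra h
    push_neg at h
    obtain ⟨h1, h2⟩ := lt_min_iff.mp h
    obtain ⟨n, hn⟩ := exists_lt_of_lt_ciSup h1
    obtain ⟨k, hk⟩ := exists_lt_of_lt_ciSup h2
    have hle : Bmu A ((x - y) ^ (n + k + 2)) ≤ ⨆ j : ℕ, Bmu A ((x - y) ^ (j + 1)) :=
      le_ciSup (hbA (x - y)) (n + k + 1)
    exact absurd (((lt_min hn hk).trans_le (Bmu_binom A x y n k)).trans_le hle)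
      (lt_irrefl _)
  · rw [hrnu x, hrnu y, hrnu (x - y)]
    refine le_of_forall_pos_le_add fun ε hε => ?_
    obtain ⟨n, hn⟩ := exists_lt_of_ciInf_lt
      (lt_add_of_pos_right (⨅ j : ℕ, Nnu A (x ^ (j + 1))) hε)
    obtain ⟨k, hk⟩ := exists_lt_of_ciInf_lt
      (lt_add_of_pos_right (⨅ j : ℕ, Nnu A (y ^ (j + 1))) hε)
    calc (⨅ j : ℕ, Nnu A ((x - y) ^ (j + 1))) ≤ Nnu A ((x - y) ^ (n + k + 2)) :=
          ciInf_le (hbB (x - y)) (n + k + 1)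
      _ ≤ max (Nnu A (x ^ (n + 1))) (Nnu A (y ^ (k + 1))) := Nnu_binom A x y n k
      _ ≤ max (⨅ j : ℕ, Nnu A (x ^ (j + 1))) (⨅ j : ℕ, Nnu A (y ^ (j + 1))) + ε := by
          refine max_le ?_ ?_
          · exact hn.le.trans (add_le_add (le_max_left _ _) le_rfl)
          · exact hk.le.trans (add_le_add (le_max_right _ _) le_rfl)
  · rw [hrmu x, hrmu y, hrmu (x * y)]
    refine max_le (ciSup_mono (hbA _) fun n => ?_) (ciSup_mono (hbA _) fun n => ?_)
    · exact Bmu_dvd A ⟨y ^ (n + 1), (mul_pow x y (n + 1))⟩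
    · exact Bmu_dvd A ⟨x ^ (n + 1), by rw [← mul_pow, mul_comm]⟩
  · rw [hrnu x, hrnu y, hrnu (x * y)]
    refine le_min (ciInf_mono (hbB _) fun n => ?_) (ciInf_mono (hbB _) fun n => ?_)
    · exact Nnu_dvd A ⟨y ^ (n + 1), (mul_pow x y (n + 1))⟩
    · exact Nnu_dvd A ⟨x ^ (n + 1), by rw [← mul_pow, mul_comm]⟩
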